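/- With B, critical values, and i(t,t') as above, the number of half-open intervals [t_k, t_j) in B equals i(t_k,t') - i(t_k,t_j) - i(t'',t') + i(t'',t_j) for any t'' with t_{k-1} < t'' < t_k and any t' with t_{j-1} < t' < t_j. -/
import Mathlib


open Classical Multiset

noncomputable section

/-- The four kinds of intervals: closed-closed, closed-open, open-closed, open-open. -/
inductive BarKind : Type
  | cc | co | oc | oo
  deriving DecidableEq

/-- A real interval of one of the four types, with endpoints `a ≤ b`. -/
structure Bar : Type where
  kind : BarKind
  a : ℝ
  b : ℝ

instance : DecidableEq Bar := Classical.decEq _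

namespace Bar

/-- The underlying set of points of the interval. -/
def toSet (I : Bar) : Set ℝ :=
  match I.kind with
  | .cc => Set.Icc I.a I.b
  | .co => Set.Ico I.a I.b
  | .oc => Set.Ioc I.a I.b
  | .oo => Set.Ioo I.a I.b

/-- Nonemptiness condition: `a ≤ b` for closed intervals, `a < b` otherwise. -/
def Valid (I : Bar) : Prop :=
  match I.kind with
  | .cc => I.a ≤ I.b
  | _ => I.a < I.b

def rightOpen (I : Bar) : Prop := I.kind = .co ∨ I.kind = .oo
def leftOpen (I : Bar) : Prop := I.kind = .oc ∨ I.kind = .oo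
def leftClosed (I : Bar) : Prop := I.kind = .cc ∨ I.kind = .co

end Bar

/-- `i(t,t')`: the number of intervals of `B` containing `[t,t']`. -/
def icount (B : Multiset Bar) (t t' : ℝ) : ℕ :=
  countP (fun I => Set.Icc t t' ⊆ I.toSet) B

/-- `l(t)`: the number of intervals of `B` containing `t`. -/
def lcount (B : Multiset Bar) (t : ℝ) : ℕ :=
  countP (fun I => t ∈ I.toSet) B

/-- `l⁺(t;t')`: intervals of `B` containing `t` with open right endpoint `≤ t'`. -/
def lplus (B : Multiset Bar) (t t' : ℝ) : ℕ :=
  countP (fun I => t ∈ I.toSet ∧ I.rightOpen ∧ I.b ≤ t') B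

/-- `l⁻(t;t'')`: intervals of `B` containing `t` with open left endpoint `≥ t''`. -/
def lminus (B : Multiset Bar) (t t'' : ℝ) : ℕ :=
  countP (fun I => t ∈ I.toSet ∧ I.leftOpen ∧ t'' ≤ I.a) B

/-- `e(t;t',t'')`: open intervals `(a,b)` of `B` with `t'' ≤ a < t < b ≤ t'`. -/
def ecount (B : Multiset Bar) (t t' t'' : ℝ) : ℕ :=
  countP (fun I => I.kind = .oo ∧ t'' ≤ I.a ∧ I.a < t ∧ t < I.b ∧ I.b ≤ t') B

/-- All endpoints of intervals of `B` lie among the critical values `t 0, …, t N`. -/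
def endpointsIn (B : Multiset Bar) (t : ℕ → ℝ) (N : ℕ) : Prop :=
  ∀ I ∈ B, (∃ i ≤ N, I.a = t i) ∧ (∃ j ≤ N, I.b = t j)

lemma indicator4 (Q P1 P2 P3 P4 : Prop) (h21 : P2 → P1) (h31 : P3 → P1)
    (h44 : P4 ↔ P2 ∧ P3) (hQ : Q ↔ P1 ∧ ¬P2 ∧ ¬P3) :
    (if Q then (1:ℤ) else 0) =
      (if P1 then 1 else 0) - (if P2 then 1 else 0) - (if P3 then 1 else 0)
        + (if P4 then 1 else 0) := by
  by_cases hp1 : P1 <;> by_cases hp2 : P2 <;> by_cases hp3 : P3 <;>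
    simp_all <;> tauto

lemma key (N k j : ℕ) (t : ℕ → ℝ) (ht : StrictMono t) (hkj : k < j) (hj1 : 1 ≤ j)
    (t'' t' : ℝ) (h1 : t'' < t k) (h2 : k = 0 ∨ t (k - 1) < t'')
    (h3 : t (j - 1) < t') (h4 : t' < t j)
    (I : Bar) (ha : ∃ i ≤ N, I.a = t i) (hb : ∃ i ≤ N, I.b = t i) :
    (if (⟨.co, t k, t j⟩ : Bar) = I then (1:ℤ) else 0) =
      (if Set.Icc (t k) t' ⊆ I.toSet then 1 else 0)
        - (if Set.Icc (t k) (t j) ⊆ I.toSet then 1 else 0)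
        - (if Set.Icc t'' t' ⊆ I.toSet then 1 else 0)
        + (if Set.Icc t'' (t j) ⊆ I.toSet then 1 else 0) := by
  have hk1 : t k ≤ t (j - 1) := ht.monotone (by omega)
  have hkt' : t k < t' := lt_of_le_of_lt hk1 h3
  have hkj' : t k < t j := ht hkj
  have critb : ∀ n, t (j - 1) < t n → t j ≤ t n := by
    intro n hn
    have := ht.lt_iff_lt.mp hn
    exact ht.monotone (by omega)
  have crita : ∀ m, t'' ≤ t m → t k ≤ t m := by
    intro m hm
    rcases h2 with h0 | h2
    · rw [h0]; exact ht.monotone (Nat.zero_le m)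
    · have := ht.lt_iff_lt.mp (lt_of_lt_of_le h2 hm)
      exact ht.monotone (by omega)
  apply indicator4
  · exact fun h => (Set.Icc_subset_Icc_right h4.le).trans h
  · exact fun h => (Set.Icc_subset_Icc_left h1.le).trans h
  · constructor
    · exact fun h => ⟨(Set.Icc_subset_Icc_left h1.le).trans h,
        (Set.Icc_subset_Icc_right h4.le).trans h⟩
    · rintro ⟨hp2, hp3⟩ x hx
      by_cases hxt : x ≤ t'
      · exact hp3 ⟨hx.1, hxt⟩
      · exact hp2 ⟨le_of_lt (lt_of_lt_of_le hkt' (le_of_not_ge hxt)), hx.2⟩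
  · obtain ⟨m, hm, ham⟩ := ha
    obtain ⟨n, hn, hbn⟩ := hb
    obtain ⟨kind, a, b⟩ := I
    simp only at ham hbn
    subst ham hbn
    cases kind
    · -- cc
      simp only [Bar.toSet, Set.Icc_subset_Icc_iff hkt'.le,
        Set.Icc_subset_Icc_iff hkj'.le, Set.Icc_subset_Icc_iff (h1.trans hkt').le,
        Set.Icc_subset_Icc_iff (h1.trans hkj').le, Bar.mk.injEq]
      constructor
      · rintro ⟨h, -, -⟩; exact absurd h (by simp)
      · rintro ⟨⟨u1, u2⟩, hn2, -⟩
        exact absurd ⟨u1, critb n (lt_of_lt_of_le h3 u2)⟩ hn2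
    · -- co
      simp only [Bar.toSet, Set.Icc_subset_Ico_iff hkt'.le,
        Set.Icc_subset_Ico_iff hkj'.le, Set.Icc_subset_Ico_iff (h1.trans hkt').le,
        Set.Icc_subset_Ico_iff (h1.trans hkj').le, Bar.mk.injEq]
      constructor
      · rintro ⟨-, hA, hBq⟩
        refine ⟨⟨le_of_eq hA.symm, hBq ▸ h4⟩, ?_, ?_⟩
        · rintro ⟨-, hh⟩; rw [← hBq] at hh; exact lt_irrefl _ hh
        · rintro ⟨hh, -⟩; rw [← hA] at hh; exact absurd hh (not_le.mpr h1)
      · rintro ⟨⟨u1, u2⟩, hn2, hn3⟩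
        have hjn : t j ≤ t n := critb n (h3.trans u2)
        have hn_eq : t n = t j := by
          rcases lt_or_eq_of_le hjn with hlt | heq
          · exact absurd ⟨u1, hlt⟩ hn2
          · exact heq.symm
        have hm_eq : t m = t k := by
          have h'' : t'' < t m := by
            by_contra hc
            exact hn3 ⟨le_of_not_gt hc, u2⟩
          exact le_antisymm u1 (crita m h''.le)
        exact ⟨trivial, hm_eq.symm, hn_eq.symm⟩
    · -- oc
      simp only [Bar.toSet, Set.Icc_subset_Ioc_iff hkt'.le,
        Set.Icc_subset_Ioc_iff hkj'.le, Set.Icc_subset_Ioc_iff (h1.trans hkt').le,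
        Set.Icc_subset_Ioc_iff (h1.trans hkj').le, Bar.mk.injEq]
      constructor
      · rintro ⟨h, -, -⟩; exact absurd h (by simp)
      · rintro ⟨⟨u1, u2⟩, hn2, -⟩
        exact absurd ⟨u1, critb n (lt_of_lt_of_le h3 u2)⟩ hn2
    · -- oo
      simp only [Bar.toSet, Set.Icc_subset_Ioo_iff hkt'.le,
        Set.Icc_subset_Ioo_iff hkj'.le, Set.Icc_subset_Ioo_iff (h1.trans hkt').le,
        Set.Icc_subset_Ioo_iff (h1.trans hkj').le, Bar.mk.injEq]
      constructor
      · rintro ⟨h, -, -⟩; exact absurd h (by simp)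
      · rintro ⟨⟨u1, u2⟩, -, hn3⟩
        have h'' : t'' ≤ t m := by
          by_contra hc
          exact hn3 ⟨lt_of_not_ge hc, u2⟩
        exact absurd u1 (not_lt.mpr (crita m h''))

theorem stmt4 (N : ℕ) (t : ℕ → ℝ) (ht : StrictMono t)
    (B : Multiset Bar) (hB : endpointsIn B t N)
    (k j : ℕ) (hkj : k < j) (hj1 : 1 ≤ j) (hjN : j ≤ N)
    (t'' t' : ℝ) (h1 : t'' < t k) (h2 : k = 0 ∨ t (k - 1) < t'')
    (h3 : t (j - 1) < t') (h4 : t' < t j) :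
    (count (⟨.co, t k, t j⟩ : Bar) B : ℤ) =
      (icount B (t k) t' : ℤ) - icount B (t k) (t j) - icount B t'' t'
        + icount B t'' (t j) := by
  induction B using Multiset.induction_on with
  | empty => simp [icount]
  | cons a s ih =>
    have hBs : endpointsIn s t N := fun I hI => hB I (mem_cons_of_mem hI)
    have hIa := hB a (mem_cons_self a s)
    have ihs := ih hBs
    have hkey := key N k j t ht hkj hj1 t'' t' h1 h2 h3 h4 a hIa.1 hIa.2
    simp only [icount, countP_cons, count_cons] at *
    push_cast at *
    linarith
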